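/- Let n be a positive integer with prime factorization p₁^{e₁}⋯p_m^{e_m} and total exponent e = e₁ + ⋯ + e_m ≤ k. For complex numbers a(p) indexed by primes, define c_n = multinomial(e; e₁,…,e_m) · ∏ a(p_i)^{e_i} (the coefficient of n^{-s} in (∑_p a(p) p^{-s})^k when e = k). Then for any α ≥ 0, ∑_{n: Ω(n) = k, n is y-smooth in the primes p ≤ N} |c_n|² n^{-2α} ≤ k! · (∑_{p ≤ N} |a(p)|² p^{-2α})^k. -/

import Mathlib

open Finset

lemma multinomial_subset' {s t : Finset ℕ} (h : s ⊆ t) (f : ℕ → ℕ)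
    (h0 : ∀ i ∈ t, i ∉ s → f i = 0) : Nat.multinomial t f = Nat.multinomial s f := by
  unfold Nat.multinomial
  rw [← Finset.sum_subset h (fun i hi hni => h0 i hi hni),
    ← Finset.prod_subset h (fun i hi hni => by simp [h0 i hi hni])]

lemma multinomial_le_fact {s : Finset ℕ} (f : ℕ → ℕ) :
    Nat.multinomial s f ≤ (∑ i ∈ s, f i).factorial :=
  Nat.le_of_dvd (Nat.factorial_pos _) ⟨_, (Nat.multinomial_spec s f).symm.trans (mul_comm _ _)⟩

lemma omega_eq_sum (n : ℕ) :
    ∑ p ∈ n.primeFactors, n.factorization p = n.primeFactorsList.length := by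
  have := Multiset.toFinset_sum_count_eq (n.primeFactorsList : Multiset ℕ)
  simpa [Nat.primeFactorsList_count_eq] using this

theorem stmt8 (a : ℕ → ℂ) (k N : ℕ) (hN : 2 ≤ N) (α : ℝ) (hα : 0 ≤ α) :
    ∑ n ∈ (Finset.Icc 1 (N ^ k)).filter
        (fun n => n.primeFactorsList.length = k ∧ ∀ p ∈ n.primeFactors, p ≤ N),
      ((Nat.multinomial n.primeFactors (fun p => n.factorization p) : ℝ) *
          ∏ p ∈ n.primeFactors, ‖a p‖ ^ (n.factorization p)) ^ 2 *
        (n : ℝ) ^ (-(2 * α)) ≤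
      (Nat.factorial k : ℝ) *
        (∑ p ∈ (Finset.Icc 1 N).filter Nat.Prime,
            ‖a p‖ ^ 2 * (p : ℝ) ^ (-(2 * α))) ^ k := by
  classical
  set S : Finset ℕ := (Finset.Icc 1 N).filter Nat.Prime with hSdef
  set t : ℕ → ℝ := fun p => ‖a p‖ ^ 2 * (p : ℝ) ^ (-(2 * α)) with htdef
  have ht0 : ∀ p, 0 ≤ t p := fun p =>
    mul_nonneg (sq_nonneg _) (Real.rpow_nonneg (Nat.cast_nonneg p) _)
  set g : (ℕ → ℕ) → ℝ := fun f => (Nat.multinomial S f : ℝ) * ∏ p ∈ S, t p ^ f p with hgdef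
  have hg0 : ∀ f, 0 ≤ g f := fun f =>
    mul_nonneg (Nat.cast_nonneg _) (Finset.prod_nonneg fun p _ => pow_nonneg (ht0 p) _)
  set F := (Finset.Icc 1 (N ^ k)).filter
      (fun n => n.primeFactorsList.length = k ∧ ∀ p ∈ n.primeFactors, p ≤ N) with hFdef
  -- facts about n ∈ F
  have hmem : ∀ n ∈ F, n ≠ 0 ∧ n.primeFactorsList.length = k ∧ ∀ p ∈ n.primeFactors, p ≤ N := by
    intro n hn
    rw [hFdef, Finset.mem_filter, Finset.mem_Icc] at hn
    exact ⟨by omega, hn.2⟩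
  have hsubS : ∀ n ∈ F, n.primeFactors ⊆ S := by
    intro n hn p hp
    obtain ⟨-, -, hple⟩ := hmem n hn
    rw [hSdef, Finset.mem_filter, Finset.mem_Icc]
    have hp' := Nat.prime_of_mem_primeFactors hp
    exact ⟨⟨hp'.one_lt.le, hple p hp⟩, hp'⟩
  -- per-term bound
  have hterm : ∀ n ∈ F,
      ((Nat.multinomial n.primeFactors (fun p => n.factorization p) : ℝ) *
          ∏ p ∈ n.primeFactors, ‖a p‖ ^ (n.factorization p)) ^ 2 *
        (n : ℝ) ^ (-(2 * α)) ≤ (k.factorial : ℝ) * g (fun p => n.factorization p) := by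
    intro n hn
    obtain ⟨hn0, hlen, -⟩ := hmem n hn
    have hE : ∑ p ∈ n.primeFactors, n.factorization p = k := (omega_eq_sum n).trans hlen
    have hz : ∀ p ∈ S, p ∉ n.primeFactors → n.factorization p = 0 := by
      intro p _ hp
      exact Finsupp.notMem_support_iff.mp (by rwa [Nat.support_factorization])
    have hmult : Nat.multinomial S (fun p => n.factorization p) =
        Nat.multinomial n.primeFactors (fun p => n.factorization p) :=
      multinomial_subset' (hsubS n hn) _ hz
    have hprod : ∏ p ∈ S, t p ^ n.factorization p
        = ∏ p ∈ n.primeFactors, t p ^ n.factorization p :=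
      (Finset.prod_subset (hsubS n hn) (fun p hp hnp => by rw [hz p hp hnp, pow_zero])).symm
    -- n^{-(2α)} as a product
    have hn' : (n : ℝ) = ∏ p ∈ n.primeFactors, (p : ℝ) ^ n.factorization p := by
      conv_lhs => rw [← Nat.factorization_prod_pow_eq_self hn0]
      rw [Finsupp.prod]
      push_cast [Nat.support_factorization]
      rfl
    have hrg : (n : ℝ) ^ (-(2 * α)) =
        ∏ p ∈ n.primeFactors, ((p : ℝ) ^ (-(2 * α))) ^ n.factorization p := by
      rw [hn', ← Real.finset_prod_rpow _ _ (fun p _ => pow_nonneg (Nat.cast_nonneg p) _)]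
      refine Finset.prod_congr rfl fun p hp => ?_
      rw [← Real.rpow_natCast (p : ℝ) (n.factorization p), ← Real.rpow_mul (Nat.cast_nonneg p),
        mul_comm, Real.rpow_mul (Nat.cast_nonneg p), Real.rpow_natCast]
    have hMle : (Nat.multinomial n.primeFactors (fun p => n.factorization p) : ℝ) ≤
        (k.factorial : ℝ) := by
      exact_mod_cast (multinomial_le_fact _).trans_eq (by rw [hE])
    set M : ℝ := (Nat.multinomial n.primeFactors (fun p => n.factorization p) : ℝ) with hM
    have hM0 : 0 ≤ M := Nat.cast_nonneg _
    have hexp : g (fun p => n.factorization p) =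
        M * ((∏ p ∈ n.primeFactors, ‖a p‖ ^ n.factorization p) ^ 2 *
          (n : ℝ) ^ (-(2 * α))) := by
      rw [hgdef]
      simp only [hmult, hprod]
      simp only [htdef]
      rw [hrg, ← hM]
      congr 1
      rw [← Finset.prod_pow, ← Finset.prod_mul_distrib]
      exact Finset.prod_congr rfl fun p _ => by rw [mul_pow, ← pow_mul, ← pow_mul, mul_comm 2]
    rw [hexp, mul_pow, mul_assoc]
    have h1 : 0 ≤ (∏ p ∈ n.primeFactors, ‖a p‖ ^ n.factorization p) ^ 2 *
        (n : ℝ) ^ (-(2 * α)) :=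
      mul_nonneg (sq_nonneg _) (Real.rpow_nonneg (Nat.cast_nonneg n) _)
    have := mul_le_mul_of_nonneg_right (mul_le_mul_of_nonneg_right hMle hM0) h1
    calc M ^ 2 * ((∏ p ∈ n.primeFactors, ‖a p‖ ^ n.factorization p) ^ 2 *
          (n : ℝ) ^ (-(2 * α)))
        ≤ (k.factorial : ℝ) * M * ((∏ p ∈ n.primeFactors,
            ‖a p‖ ^ n.factorization p) ^ 2 * (n : ℝ) ^ (-(2 * α))) := by
          rw [sq]; exact this
      _ = (k.factorial : ℝ) * (M * _) := by ring
  -- sum the bound and compare with piAntidiag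
  calc ∑ n ∈ F, ((Nat.multinomial n.primeFactors (fun p => n.factorization p) : ℝ) *
          ∏ p ∈ n.primeFactors, ‖a p‖ ^ (n.factorization p)) ^ 2 *
        (n : ℝ) ^ (-(2 * α))
      ≤ ∑ n ∈ F, (k.factorial : ℝ) * g (fun p => n.factorization p) :=
        Finset.sum_le_sum hterm
    _ = (k.factorial : ℝ) * ∑ n ∈ F, g (fun p => n.factorization p) := by
        rw [Finset.mul_sum]
    _ ≤ (k.factorial : ℝ) * ∑ f ∈ Finset.piAntidiag S k, g f := by
        refine mul_le_mul_of_nonneg_left ?_ (Nat.cast_nonneg _)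
        have hinj : Set.InjOn (fun n : ℕ => (fun p => n.factorization p : ℕ → ℕ)) (F : Set ℕ) := by
          intro m hm n hn h
          obtain ⟨hm0, -, -⟩ := hmem m hm
          obtain ⟨hn0, -, -⟩ := hmem n hn
          exact Nat.factorization_inj hm0 hn0 (Finsupp.ext fun p => congrFun h p)
        rw [← Finset.sum_image (fun m hm n hn h => hinj hm hn h)]
        refine Finset.sum_le_sum_of_subset_of_nonneg ?_ (fun f _ _ => hg0 f)
        intro f hf
        rw [Finset.mem_image] at hf
        obtain ⟨n, hn, rfl⟩ := hf
        obtain ⟨hn0, hlen, -⟩ := hmem n hn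
        rw [Finset.mem_piAntidiag]
        constructor
        · rw [← Finset.sum_subset (hsubS n hn) (fun p hp hnp =>
            Finsupp.notMem_support_iff.mp (by rwa [Nat.support_factorization]))]
          exact (omega_eq_sum n).trans hlen
        · intro p hp
          exact hsubS n hn (by rwa [← Nat.support_factorization, Finsupp.mem_support_iff])
    _ = (k.factorial : ℝ) * (∑ p ∈ S, t p) ^ k := by
        rw [Finset.sum_pow_eq_sum_piAntidiag]
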